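/- The number of normal DD-words of degree 3 over an n-letter alphabet is 5n³, and of degree 4 is 14n⁴; in general the count for degree m equals C_m · n^m where C_m is the m-th Catalan number. -/

import Mathlib

/-- Normal `DD`-words over an alphabet `X`: either a letter `x`,
or `x ≺ v`, or `x ≻ v`, or `(x ≻ u₁) ≻ u₂`, with `x` a letter and
`v, u₁, u₂` normal `DD`-words. -/
inductive DDWord (X : Type) where
  | ltr : X → DDWord X
  | precW : X → DDWord X → DDWord X
  | succW : X → DDWord X → DDWord X
  | succ2 : X → DDWord X → DDWord X → DDWord X

/-- The degree of a normal `DD`-word: the number of letter occurrences. -/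
def DDWord.deg {X : Type} : DDWord X → ℕ
  | .ltr _ => 1
  | .precW _ v => 1 + v.deg
  | .succW _ v => 1 + v.deg
  | .succ2 _ u v => 1 + u.deg + v.deg

deriving instance DecidableEq for DDWord

open Finset

def S (n : ℕ) : ℕ → Finset (DDWord (Fin n))
  | 0 => ∅
  | 1 => Finset.univ.image DDWord.ltr
  | (m+2) =>
      (Finset.univ ×ˢ S n (m+1)).image (fun p => DDWord.precW p.1 p.2)
      ∪ (Finset.univ ×ˢ S n (m+1)).image (fun p => DDWord.succW p.1 p.2)
      ∪ (Finset.range (m+1)).attach.biUnion (fun a =>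
          (Finset.univ ×ˢ S n a.1 ×ˢ S n (m+1-a.1)).image
            (fun p => DDWord.succ2 p.1 p.2.1 p.2.2))
  termination_by m => m
  decreasing_by
    all_goals first
      | omega
      | (have := Finset.mem_range.mp a.2; omega)

lemma DDWord.deg_pos {X : Type} (w : DDWord X) : 1 ≤ w.deg := by
  cases w <;> simp [DDWord.deg] <;> omega

lemma S_deg (n : ℕ) : ∀ m, ∀ w ∈ S n m, w.deg = m := by
  intro m
  induction m using Nat.strong_induction_on with
  | _ m ih =>
    match m with
    | 0 => simp [S]
    | 1 =>
      intro w hw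
      simp only [S, mem_image, mem_univ, true_and] at hw
      obtain ⟨x, rfl⟩ := hw
      rfl
    | (m+2) =>
      intro w hw
      rw [S] at hw
      simp only [mem_union, mem_image, mem_biUnion, mem_product, mem_univ, true_and,
        mem_attach, Prod.exists] at hw
      rcases hw with (⟨x, v, hv, rfl⟩ | ⟨x, v, hv, rfl⟩) | ⟨a, x, u, v, ⟨hu, hv⟩, rfl⟩
      · have := ih (m+1) (by omega) v hv
        simp only [DDWord.deg, this]
        omega
      · have := ih (m+1) (by omega) v hv
        simp only [DDWord.deg, this]
        omega
      · have ha := Finset.mem_range.mp a.2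
        have h1 := ih a.1 (by omega) u hu
        have h2 := ih (m+1-a.1) (by omega) v hv
        simp only [DDWord.deg, h1, h2]
        omega

lemma S_mem (n : ℕ) (w : DDWord (Fin n)) : w ∈ S n w.deg := by
  induction w with
  | ltr x => simp [DDWord.deg, S]
  | precW x v ihv =>
    obtain ⟨d, hd⟩ : ∃ d, v.deg = d + 1 := ⟨v.deg - 1, by have := v.deg_pos; omega⟩
    have : (DDWord.precW x v).deg = d + 2 := by simp [DDWord.deg]; omega
    rw [this, S]
    simp only [mem_union, mem_image, mem_product, mem_univ, true_and, Prod.exists]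
    exact Or.inl (Or.inl ⟨x, v, by rw [← hd]; exact ihv, rfl⟩)
  | succW x v ihv =>
    obtain ⟨d, hd⟩ : ∃ d, v.deg = d + 1 := ⟨v.deg - 1, by have := v.deg_pos; omega⟩
    have : (DDWord.succW x v).deg = d + 2 := by simp [DDWord.deg]; omega
    rw [this, S]
    simp only [mem_union, mem_image, mem_product, mem_univ, true_and, Prod.exists]
    exact Or.inl (Or.inr ⟨x, v, by rw [← hd]; exact ihv, rfl⟩)
  | succ2 x u v ihu ihv =>
    have hu1 := u.deg_pos
    have hv1 := v.deg_pos
    obtain ⟨d, hd⟩ : ∃ d, u.deg + v.deg = d + 1 := ⟨u.deg + v.deg - 1, by omega⟩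
    have hdeg : (DDWord.succ2 x u v).deg = d + 1 + 1 := by simp [DDWord.deg]; omega
    rw [hdeg, S]
    apply Finset.mem_union_right
    apply Finset.mem_biUnion.mpr
    refine ⟨⟨u.deg, Finset.mem_range.mpr (by omega)⟩, Finset.mem_attach _ _, ?_⟩
    simp only [mem_image, mem_product, mem_univ, true_and, Prod.exists]
    refine ⟨x, u, v, ⟨ihu, ?_⟩, rfl⟩
    have : d + 1 - u.deg = v.deg := by omega
    rw [this]; exact ihv


lemma S_card_zero (n : ℕ) : (S n 0).card = 0 := by simp [S]

lemma S_card_one (n : ℕ) : (S n 1).card = n := by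
  rw [S, Finset.card_image_of_injective _ (fun a b h => by injection h),
    Finset.card_univ, Fintype.card_fin]

lemma S_card_succ (n m : ℕ) :
    (S n (m+2)).card = n * (S n (m+1)).card + n * (S n (m+1)).card
      + ∑ a ∈ Finset.range (m+1), n * (S n a).card * (S n (m+1-a)).card := by
  have hinjP : Function.Injective (fun p : Fin n × DDWord (Fin n) => DDWord.precW p.1 p.2) := by
    rintro ⟨a, b⟩ ⟨c, d⟩ h
    injection h with h1 h2
    simp_all
  have hinjS : Function.Injective (fun p : Fin n × DDWord (Fin n) => DDWord.succW p.1 p.2) := by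
    rintro ⟨a, b⟩ ⟨c, d⟩ h
    injection h with h1 h2
    simp_all
  have hinjT : Function.Injective
      (fun p : Fin n × DDWord (Fin n) × DDWord (Fin n) => DDWord.succ2 p.1 p.2.1 p.2.2) := by
    rintro ⟨a, b, c⟩ ⟨d, e, f⟩ h
    injection h with h1 h2 h3
    simp_all
  have d1 : Disjoint
      ((Finset.univ ×ˢ S n (m+1)).image (fun p => DDWord.precW p.1 p.2))
      ((Finset.univ ×ˢ S n (m+1)).image (fun p => DDWord.succW p.1 p.2)) := by
    simp only [Finset.disjoint_left, mem_image, mem_product, Finset.mem_univ, true_and,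
      Prod.exists]
    rintro w ⟨x, v, hv, rfl⟩ ⟨y, u, hu, h⟩
    cases h
  have d2 : Disjoint
      (((Finset.univ ×ˢ S n (m+1)).image (fun p => DDWord.precW p.1 p.2))
        ∪ ((Finset.univ ×ˢ S n (m+1)).image (fun p => DDWord.succW p.1 p.2)))
      ((Finset.range (m+1)).attach.biUnion (fun a =>
          (Finset.univ ×ˢ S n a.1 ×ˢ S n (m+1-a.1)).image
            (fun p => DDWord.succ2 p.1 p.2.1 p.2.2))) := by
    simp only [Finset.disjoint_left, Finset.mem_union, mem_image, mem_product,
      Finset.mem_univ, true_and, Finset.mem_biUnion, mem_attach, Prod.exists]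
    rintro w (⟨x, v, hv, rfl⟩ | ⟨x, v, hv, rfl⟩) ⟨a, y, u, u', ⟨hu, hu'⟩, h⟩ <;>
      cases h
  have hdisj : ∀ a ∈ (Finset.range (m+1)).attach, ∀ b ∈ (Finset.range (m+1)).attach,
      a ≠ b → Disjoint
        ((Finset.univ ×ˢ S n a.1 ×ˢ S n (m+1-a.1)).image
            (fun p => DDWord.succ2 p.1 p.2.1 p.2.2))
        ((Finset.univ ×ˢ S n b.1 ×ˢ S n (m+1-b.1)).image
            (fun p => DDWord.succ2 p.1 p.2.1 p.2.2)) := by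
    intro a _ b _ hab
    simp only [Finset.disjoint_left, mem_image, mem_product, Finset.mem_univ, true_and,
      Prod.exists]
    rintro w ⟨x, u, v, ⟨hu, hv⟩, rfl⟩ ⟨y, u', v', ⟨hu', hv'⟩, h⟩
    injection h with h1 h2 h3
    subst h2
    exact hab (Subtype.ext ((S_deg n a.1 u' hu).symm.trans (S_deg n b.1 u' hu')))
  rw [S, Finset.card_union_of_disjoint d2, Finset.card_union_of_disjoint d1,
    Finset.card_image_of_injective _ hinjP, Finset.card_image_of_injective _ hinjS,
    Finset.card_biUnion hdisj]
  congr 1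
  · rw [Finset.card_product, Finset.card_univ, Fintype.card_fin]
  · rw [← Finset.sum_attach (Finset.range (m+1))
      (fun a => n * (S n a).card * (S n (m+1-a)).card)]
    apply Finset.sum_congr rfl
    intro a _
    rw [Finset.card_image_of_injective _ hinjT, Finset.card_product, Finset.card_product,
      Finset.card_univ, Fintype.card_fin, mul_assoc]

lemma S_card (n : ℕ) : ∀ m, (S n (m+1)).card = catalan (m+1) * n ^ (m+1) := by
  intro m
  induction m using Nat.strong_induction_on with
  | _ m ih =>
    match m with
    | 0 => simp [S_card_one, catalan_one]
    | (m+1) =>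
      rw [S_card_succ, ih m (by omega)]
      have hsum : ∑ a ∈ Finset.range (m+1), n * (S n a).card * (S n (m+1-a)).card
          = ∑ i ∈ Finset.range m,
              (catalan (i+1) * catalan (m-i)) * n ^ (m+2) := by
        rw [Finset.sum_range_succ']
        simp only [S_card_zero, mul_zero, zero_mul, add_zero]
        apply Finset.sum_congr rfl
        intro i hi
        have him : i < m := Finset.mem_range.mp hi
        have e1 : (S n (i+1)).card = catalan (i+1) * n ^ (i+1) := ih i (by omega)
        have e2 : m + 1 - (i+1) = (m - i - 1) + 1 := by omega
        have e3 : (S n ((m-i-1)+1)).card = catalan ((m-i-1)+1) * n ^ ((m-i-1)+1) :=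
          ih (m-i-1) (by omega)
        have e4 : m - i - 1 + 1 = m - i := by omega
        rw [e1, e2, e3, e4]
        have e5 : (i+1) + (m-i) + 1 = m + 2 := by omega
        rw [← e5, pow_add, pow_add]
        ring
      rw [hsum]
      rw [← Finset.sum_mul]
      have hcat : catalan (m+2) = 2 * catalan (m+1)
          + ∑ i ∈ Finset.range m, catalan (i+1) * catalan (m-i) := by
        rw [show m + 2 = (m+1) + 1 from rfl, catalan_succ (m+1),
          Fin.sum_univ_eq_sum_range (fun i => catalan i * catalan (m+1-i)) (m+2),
          Finset.sum_range_succ', Finset.sum_range_succ]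
        simp only [catalan_zero, mul_one, one_mul, Nat.sub_self, Nat.succ_sub_succ,
          Nat.sub_zero]
        omega
      rw [hcat]
      ring

lemma cat_fact (m : ℕ) :
    (2 * m).factorial / ((m + 1).factorial * m.factorial) = catalan m := by
  have h1 := Nat.choose_mul_factorial_mul_factorial (show m ≤ 2 * m by omega)
  rw [show 2 * m - m = m from by omega] at h1
  have h2 : (m + 1) * catalan m = Nat.centralBinom m :=
    succ_mul_catalan_eq_centralBinom m
  have h3 : Nat.centralBinom m = (2 * m).choose m := rfl
  have h4 : (2 * m).factorial = catalan m * ((m + 1).factorial * m.factorial) := by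
    rw [← h1, Nat.factorial_succ]
    rw [h3] at h2
    calc (2 * m).choose m * m.factorial * m.factorial
        = ((m + 1) * catalan m) * m.factorial * m.factorial := by rw [h2]
      _ = catalan m * ((m + 1) * m.factorial * m.factorial) := by ring
  rw [h4, Nat.mul_div_cancel]
  positivity


/-- The number of normal `DD`-words of degree 3 over an `n`-letter alphabet is `5n³`,
of degree 4 is `14n⁴`, and in general the count in degree `m ≥ 1` is `C_m · n^m`
where `C_m = (2m)!/((m+1)!·m!)` is the `m`-th Catalan number. -/
theorem card_normal_DDwords_deg3_deg4 (n : ℕ) :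
    Nat.card {w : DDWord (Fin n) // w.deg = 3} = 5 * n ^ 3 ∧
    Nat.card {w : DDWord (Fin n) // w.deg = 4} = 14 * n ^ 4 ∧
    ∀ m : ℕ, 1 ≤ m →
      Nat.card {w : DDWord (Fin n) // w.deg = m}
        = (2 * m).factorial / ((m + 1).factorial * m.factorial) * n ^ m := by
  have key : ∀ m : ℕ, 1 ≤ m →
      Nat.card {w : DDWord (Fin n) // w.deg = m} = catalan m * n ^ m := by
    intro m hm
    obtain ⟨k, rfl⟩ : ∃ k, m = k + 1 := ⟨m - 1, by omega⟩
    have H : ∀ w : DDWord (Fin n), w.deg = k + 1 ↔ w ∈ S n (k + 1) :=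
      fun w => ⟨fun h => h ▸ S_mem n w, fun h => S_deg n _ w h⟩
    rw [Nat.card_congr (Equiv.subtypeEquivRight H), Nat.card_eq_finsetCard, S_card]
  refine ⟨?_, ?_, fun m hm => ?_⟩
  · rw [key 3 (by norm_num), catalan_three]
  · rw [key 4 (by norm_num), show catalan 4 = 14 from by
      rw [← cat_fact 4]; norm_num [Nat.factorial]]
  · rw [key m hm, cat_fact]
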